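/- arXiv:1506.08456 — 5 statements merged into one kernel-verified Lean document; each statement's English description precedes it below -/
import Mathlib

section
/- Let ℓ>0 and I=(−ℓ,ℓ), let [a,b]⊂I be a compact subinterval and ξ*∈(a,b). Let θ:I→ℝ be continuously differentiable with (ξ−ξ*)·θ(ξ)<0 for every ξ∈[a,b] with ξ≠ξ*, and θ′(ξ*)<0. Let r,ρ:[0,∞)→ℝ be measurable with |r(t)|≤1/2 and |ρ(t)|≤η for all t≥0, where η≥0. Let ξ:[0,∞)→[a,b] be differentiable with ξ′(t)=θ(ξ(t))(1+r(t))+ρ(t) for all t≥0 and ξ(0)=ξ₀∈[a,b]. Then there exists β>0, depending only on θ and [a,b], such that |ξ(t)−ξ*| ≤ |ξ₀−ξ*| e^{−βt} + η/β for all t≥0. -/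
/-- Slow motion of the shock layer (Proposition 3.5, quantitative form with remainder):
the interface position `ξ(t)` solving `ξ' = θ(ξ)(1+r(t)) + ρ(t)` with `|ρ| ≤ η`
satisfies `|ξ(t)−ξ*| ≤ |ξ₀−ξ*| e^{−βt} + η/β`. -/
theorem stmt1 (ℓ a b ξstar : ℝ) (hℓ : 0 < ℓ)
    (ha : -ℓ < a) (hb : b < ℓ) (hab : a < b)
    (hξstar : ξstar ∈ Set.Ioo a b)
    (θ : ℝ → ℝ) (hθ : ContDiffOn ℝ 1 θ (Set.Ioo (-ℓ) ℓ))
    (hsign : ∀ ξ ∈ Set.Icc a b, ξ ≠ ξstar → (ξ - ξstar) * θ ξ < 0)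
    (hθ' : deriv θ ξstar < 0) :
    ∃ β > 0, ∀ (η : ℝ), 0 ≤ η → ∀ (r ρ ξ : ℝ → ℝ) (ξ₀ : ℝ),
      Measurable r → Measurable ρ →
      (∀ t ≥ 0, |r t| ≤ 1 / 2) → (∀ t ≥ 0, |ρ t| ≤ η) →
      (∀ t ≥ 0, ξ t ∈ Set.Icc a b) →
      (∀ t ≥ 0, HasDerivAt ξ (θ (ξ t) * (1 + r t) + ρ t) t) →
      ξ 0 = ξ₀ → ξ₀ ∈ Set.Icc a b →
      ∀ t ≥ 0, |ξ t - ξstar| ≤ |ξ₀ - ξstar| * Real.exp (-β * t) + η / β := by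
  classical
  have hsub : Set.Icc a b ⊆ Set.Ioo (-ℓ) ℓ := fun x hx =>
    ⟨lt_of_lt_of_le ha hx.1, lt_of_le_of_lt hx.2 hb⟩
  have hmemθ : ξstar ∈ Set.Ioo (-ℓ) ℓ :=
    hsub ⟨hξstar.1.le, hξstar.2.le⟩
  have hopen : Set.Ioo (-ℓ) ℓ ∈ nhds ξstar := isOpen_Ioo.mem_nhds hmemθ
  have hcontAt : ∀ x ∈ Set.Icc a b, ContinuousAt θ x := fun x hx =>
    hθ.continuousOn.continuousAt (isOpen_Ioo.mem_nhds (hsub hx))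
  -- θ ξstar = 0
  have hθ0 : θ ξstar = 0 := by
    have hcs : ContinuousAt θ ξstar := hcontAt ξstar ⟨hξstar.1.le, hξstar.2.le⟩
    have h1 : θ ξstar ≤ 0 := by
      have htd : Filter.Tendsto θ (nhdsWithin ξstar (Set.Ioi ξstar)) (nhds (θ ξstar)) :=
        hcs.continuousWithinAt
      refine le_of_tendsto htd ?_
      filter_upwards [Ioo_mem_nhdsGT_of_mem (Set.left_mem_Ico.2 hξstar.2)] with x hx
      have hs := hsign x ⟨(hξstar.1.trans hx.1).le, hx.2.le⟩ (ne_of_gt hx.1)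
      nlinarith [sub_pos.2 hx.1]
    have h2 : 0 ≤ θ ξstar := by
      have htd : Filter.Tendsto θ (nhdsWithin ξstar (Set.Iio ξstar)) (nhds (θ ξstar)) :=
        hcs.continuousWithinAt
      refine ge_of_tendsto htd ?_
      filter_upwards [Ioo_mem_nhdsLT_of_mem (Set.right_mem_Ioc.2 hξstar.1)] with x hx
      have hs := hsign x ⟨hx.1.le, (hx.2.trans hξstar.2).le⟩ (ne_of_lt hx.2)
      nlinarith [sub_neg.2 hx.2]
    linarith
  -- the continuous "slope" function
  set h : ℝ → ℝ := Function.update (slope θ ξstar) ξstar (deriv θ ξstar) with hh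
  have hderiv : HasDerivAt θ (deriv θ ξstar) ξstar :=
    (((hθ.differentiableOn one_ne_zero).differentiableAt hopen)).hasDerivAt
  have hslope_val : ∀ x, x ≠ ξstar → h x = θ x / (x - ξstar) := by
    intro x hx
    rw [hh, Function.update_of_ne hx, slope_def_field, hθ0, sub_zero]
  have hconth : ContinuousOn h (Set.Icc a b) := by
    intro x hx
    by_cases hxe : x = ξstar
    · subst hxe
      refine (continuousAt_update_same.2 ?_).continuousWithinAt
      exact hasDerivAt_iff_tendsto_slope.1 hderiv
    · have hcs : ContinuousAt (slope θ ξstar) x := by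
        have : ContinuousAt (fun y => (θ y - θ ξstar) / (y - ξstar)) x :=
          ((hcontAt x hx).sub continuousAt_const).div
            ((continuous_id.sub continuous_const).continuousAt) (sub_ne_zero.2 hxe)
        refine this.congr ?_
        filter_upwards with y
        rw [slope_def_field]
      refine (hcs.congr ?_).continuousWithinAt
      filter_upwards [isOpen_ne.mem_nhds hxe] with y hy
      rw [hh, Function.update_of_ne hy]
  have hhneg : ∀ x ∈ Set.Icc a b, h x < 0 := by
    intro x hx
    by_cases hxe : x = ξstar
    · subst hxe; rw [hh, Function.update_self]; exact hθ'
    · rw [hslope_val x hxe]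
      have hs := hsign x hx hxe
      rcases lt_or_gt_of_ne (sub_ne_zero.2 hxe) with hd | hd
      · exact div_neg_of_pos_of_neg (by nlinarith) hd
      · exact div_neg_of_neg_of_pos (by nlinarith) hd
  -- maximum of h on the compact interval
  obtain ⟨x₀, hx₀, hmax⟩ := isCompact_Icc.exists_isMaxOn
    ⟨a, Set.left_mem_Icc.2 hab.le⟩ hconth
  set c : ℝ := -h x₀ with hc
  have hcpos : 0 < c := by simpa [hc] using neg_pos.2 (hhneg x₀ hx₀)
  have hkey : ∀ x ∈ Set.Icc a b, h x ≤ -c := fun x hx => by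
    simpa [hc] using hmax hx
  refine ⟨c / 2, by positivity, ?_⟩
  intro η hη r ρ ξ ξ₀ _ _ hrle hρle hξmem hξode hξ0 hξ₀mem T hT
  set β : ℝ := c / 2 with hβ
  have hβpos : 0 < β := by positivity
  -- functions for Gronwall
  set g : ℝ → ℝ := fun s => |ξ s - ξstar| with hg
  set sgn : ℝ → ℝ := fun s => if ξstar < ξ s then (1 : ℝ) else -1 with hsgn
  set D : ℝ → ℝ := fun s => θ (ξ s) * (1 + r s) + ρ s with hD
  set f' : ℝ → ℝ := fun s => if ξ s = ξstar then η else sgn s * D s with hf'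
  have hgs : ∀ s, ξ s ≠ ξstar → g s = sgn s * (ξ s - ξstar) := by
    intro s hs
    rcases lt_or_gt_of_ne hs with hlt | hlt
    · rw [hg, hsgn]; simp only [if_neg (not_lt.2 hlt.le)]
      rw [abs_of_neg (sub_neg.2 hlt)]; ring
    · rw [hg, hsgn]; simp only [if_pos hlt]
      rw [abs_of_pos (sub_pos.2 hlt)]; ring
  -- pointwise derivative of g at points where ξ s ≠ ξstar
  have hgderiv : ∀ s, 0 ≤ s → ξ s ≠ ξstar → HasDerivAt g (sgn s * D s) s := by
    intro s hs hne
    have hDs : HasDerivAt ξ (D s) s := hξode s hs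
    rcases lt_or_gt_of_ne hne with hlt | hlt
    · -- ξ s < ξstar, g = ξstar - ξ locally
      have hev : ∀ᶠ z in nhds s, ξ z < ξstar :=
        hDs.continuousAt.eventually_mem (Iio_mem_nhds hlt)
      have : HasDerivAt (fun z => ξstar - ξ z) (-D s) s := by
        simpa using (hDs.const_sub ξstar)
      have hgd : HasDerivAt g (-D s) s := by
        refine this.congr_of_eventuallyEq ?_
        filter_upwards [hev] with z hz
        rw [hg]; simp only
        rw [abs_of_neg (sub_neg.2 hz)]; ring
      have : sgn s = -1 := by rw [hsgn]; simp [not_lt.2 hlt.le]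
      rw [this]; simpa using hgd
    · have hev : ∀ᶠ z in nhds s, ξstar < ξ z :=
        hDs.continuousAt.eventually_mem (Ioi_mem_nhds hlt)
      have hgd : HasDerivAt g (D s) s := by
        refine (hDs.sub_const ξstar).congr_of_eventuallyEq ?_
        filter_upwards [hev] with z hz
        rw [hg]; simp only
        rw [abs_of_pos (sub_pos.2 hz)]
      have : sgn s = 1 := by rw [hsgn]; simp [hlt]
      rw [this]; simpa using hgd
  -- the pointwise bound
  have hbound : ∀ s ∈ Set.Ico (0 : ℝ) T, f' s ≤ (-β) * g s + η := by
    intro s hs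
    by_cases hne : ξ s = ξstar
    · rw [hf']; simp only [if_pos hne]
      have : g s = 0 := by rw [hg]; simp [hne]
      rw [this]; simp
    · rw [hf']; simp only [if_neg hne]
      have hmem := hξmem s hs.1
      have hθle : sgn s * θ (ξ s) ≤ -c * g s := by
        have hxne : ξ s - ξstar ≠ 0 := sub_ne_zero.2 hne
        have hθval : θ (ξ s) = h (ξ s) * (ξ s - ξstar) := by
          rw [hslope_val (ξ s) hne, div_mul_cancel₀ _ hxne]
        have hgpos : 0 < g s := by rw [hg]; exact abs_pos.2 hxne
        have h1 : h (ξ s) ≤ -c := hkey (ξ s) hmem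
        calc sgn s * θ (ξ s) = h (ξ s) * (sgn s * (ξ s - ξstar)) := by rw [hθval]; ring
          _ = h (ξ s) * g s := by rw [← hgs s hne]
          _ ≤ -c * g s := mul_le_mul_of_nonneg_right h1 hgpos.le
      have hgnn : 0 ≤ g s := abs_nonneg _
      have hθnp : sgn s * θ (ξ s) ≤ 0 := hθle.trans (by nlinarith)
      have hr2 : (1 : ℝ) / 2 ≤ 1 + r s := by
        have := abs_le.1 (hrle s hs.1); linarith [this.1]
      have h2 : sgn s * θ (ξ s) * (1 + r s) ≤ (1 / 2) * (sgn s * θ (ξ s)) := by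
        nlinarith
      have h3 : sgn s * ρ s ≤ η := by
        have habs := abs_le.1 (hρle s hs.1)
        have hsgn2 : sgn s = 1 ∨ sgn s = -1 := by
          by_cases hq : ξstar < ξ s
          · left; simp [hsgn, hq]
          · right; simp [hsgn, hq]
        rcases hsgn2 with hq | hq <;> rw [hq] <;> linarith [habs.1, habs.2]
      have : sgn s * D s = sgn s * θ (ξ s) * (1 + r s) + sgn s * ρ s := by
        rw [hD]; ring
      rw [this, hβ]
      nlinarith
  -- liminf slope condition
  have hslope : ∀ s ∈ Set.Ico (0 : ℝ) T, ∀ r', f' s < r' →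
      ∃ᶠ z in nhdsWithin s (Set.Ioi s), (z - s)⁻¹ * (g z - g s) < r' := by
    intro s hs r' hr'
    by_cases hne : ξ s = ξstar
    · -- use the norm-slope lemma with f = ξ - ξstar
      have hDs : HasDerivAt (fun z => ξ z - ξstar) (D s) s := (hξode s hs.1).sub_const ξstar
      have hnorm : ‖D s‖ < r' := by
        simp only [hf', if_pos hne] at hr'
        have : D s = ρ s := by simp only [hD]; rw [hne, hθ0]; ring
        rw [this, Real.norm_eq_abs]
        exact lt_of_le_of_lt (hρle s hs.1) hr'
      have := (hDs.hasDerivWithinAt (s := Set.Ici s)).liminf_right_slope_norm_le hnorm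
      refine this.mono fun z hz => ?_
      simpa [hg, Real.norm_eq_abs] using hz
    · have hgd := (hgderiv s hs.1 hne).hasDerivWithinAt (s := Set.Ici s)
      simp only [hf', if_neg hne] at hr'
      have := hgd.liminf_right_slope_le hr'
      refine this.mono fun z hz => ?_
      rw [slope_def_field] at hz
      rwa [div_eq_inv_mul] at hz
  -- continuity of g on [0, T]
  have hgcont : ContinuousOn g (Set.Icc 0 T) := by
    intro s hs
    exact ((hξode s hs.1).continuousAt.sub continuousAt_const).abs.continuousWithinAt
  have hg0 : g 0 ≤ |ξ₀ - ξstar| := by rw [hg]; simp [hξ0]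
  have := le_gronwallBound_of_liminf_deriv_right_le hgcont hslope hg0 hbound T
    (Set.right_mem_Icc.2 hT)
  have hKne : (-β : ℝ) ≠ 0 := neg_ne_zero.2 hβpos.ne'
  simp only [gronwallBound_of_K_ne_0 hKne, sub_zero] at this
  show g T ≤ _
  refine this.trans ?_
  have hexp : 0 < Real.exp (-β * T) := Real.exp_pos _
  have hexp1 : Real.exp (-β * T) ≤ 1 := by
    apply Real.exp_le_one_iff.2; nlinarith
  have heq : η / -β * (Real.exp (-β * T) - 1) = η / β * (1 - Real.exp (-β * T)) := by
    rw [div_neg]; ring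
  rw [heq]
  have hdiv : 0 ≤ η / β := by positivity
  nlinarith
end

section
/- Let ℓ>0, let a:[−ℓ,ℓ]→ℝ be continuously differentiable with a(x)>0 for all x, define b(x)=∫_{−ℓ}^{x} dt/a(t), and fix constants c∈ℝ, κ∈ℝ, ε>0. Then the function u(x) = −κ·tanh( κ(b(x)−c)/(2ε) ) satisfies ε·(a(x)u′(x))′ = u(x)u′(x) for all x∈[−ℓ,ℓ]; that is, u is an exact stationary solution of the quasilinear viscous Burgers equation ∂ₜu = ε∂ₓ(a(x)∂ₓu) − ∂ₓ(u²/2). -/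
lemma tanh_hasDerivAt (x : ℝ) :
    HasDerivAt Real.tanh (1 / Real.cosh x ^ 2) x := by
  have hc : Real.cosh x ≠ 0 := (Real.cosh_pos x).ne'
  have h := (Real.hasDerivAt_sinh x).div (Real.hasDerivAt_cosh x) hc
  have heq : (Real.cosh x * Real.cosh x - Real.sinh x * Real.sinh x) / Real.cosh x ^ 2
      = 1 / Real.cosh x ^ 2 := by
    rw [show Real.cosh x * Real.cosh x - Real.sinh x * Real.sinh x
        = Real.cosh x ^ 2 - Real.sinh x ^ 2 by ring, Real.cosh_sq_sub_sinh_sq]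
  rw [heq] at h
  exact h.congr_of_eventuallyEq (Filter.Eventually.of_forall fun y =>
    (Real.tanh_eq_sinh_div_cosh y))

/-- The profile `u(x) = −κ tanh(κ(b(x)−c)/(2ε))`, with `b(x) = ∫_{−ℓ}^x dt/a(t)`,
is an exact stationary solution of the quasilinear viscous Burgers equation:
`ε (a u')' = u u'` on `[−ℓ,ℓ]`. -/
theorem stmt3 (ℓ c κ ε : ℝ) (hℓ : 0 < ℓ) (hε : 0 < ε)
    (a : ℝ → ℝ) (ha : ContDiffOn ℝ 1 a (Set.Icc (-ℓ) ℓ))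
    (hapos : ∀ x ∈ Set.Icc (-ℓ) ℓ, 0 < a x) :
    ∀ x ∈ Set.Icc (-ℓ) ℓ,
      ε * derivWithin (fun y => a y * derivWithin
            (fun z => -κ * Real.tanh (κ * ((∫ t in (-ℓ)..z, 1 / a t) - c) / (2 * ε)))
            (Set.Icc (-ℓ) ℓ) y) (Set.Icc (-ℓ) ℓ) x
        = (-κ * Real.tanh (κ * ((∫ t in (-ℓ)..x, 1 / a t) - c) / (2 * ε)))
            * derivWithin
              (fun z => -κ * Real.tanh (κ * ((∫ t in (-ℓ)..z, 1 / a t) - c) / (2 * ε)))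
              (Set.Icc (-ℓ) ℓ) x := by
  have hle : (-ℓ) ≤ ℓ := by linarith
  set S : Set ℝ := Set.Icc (-ℓ) ℓ with hSdef
  have hS : UniqueDiffOn ℝ S := uniqueDiffOn_Icc (by linarith)
  -- extend `a` continuously to all of ℝ
  set A : ℝ → ℝ := fun t => a (Set.projIcc (-ℓ) ℓ hle t) with hAdef
  have hAcont : Continuous A := by
    exact (ha.continuousOn.restrict).comp continuous_projIcc
  have hApos : ∀ t, 0 < A t := fun t => hapos _ (Set.projIcc (-ℓ) ℓ hle t).2
  have hAeq : ∀ t ∈ S, A t = a t := fun t ht => by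
    simp [hAdef, Set.projIcc_of_mem hle ht]
  -- the antiderivative with the extended coefficient
  set B : ℝ → ℝ := fun z => ∫ t in (-ℓ)..z, 1 / A t with hBdef
  have hint : ∀ z ∈ S, (∫ t in (-ℓ)..z, 1 / a t) = B z := by
    intro z hz
    refine intervalIntegral.integral_congr fun t ht => ?_
    rw [Set.uIcc_of_le hz.1] at ht
    rw [hAeq t ⟨ht.1, le_trans ht.2 hz.2⟩]
  have hfc : Continuous fun t => 1 / A t :=
    continuous_const.div hAcont fun t => (hApos t).ne'
  have hB : ∀ x : ℝ, HasDerivAt B (1 / A x) x := fun x =>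
    (hfc.integral_hasStrictDerivAt (-ℓ) x).hasDerivAt
  -- the inner phase and the smooth version of the profile
  set G : ℝ → ℝ := fun z => κ * (B z - c) / (2 * ε) with hGdef
  have hG : ∀ x : ℝ, HasDerivAt G (κ * (1 / A x) / (2 * ε)) x := fun x =>
    (((hB x).sub_const c).const_mul κ).div_const (2 * ε)
  set U : ℝ → ℝ := fun z => -κ * Real.tanh (G z) with hUdef
  have hU : ∀ x : ℝ, HasDerivAt U
      (-κ * ((1 / Real.cosh (G x) ^ 2) * (κ * (1 / A x) / (2 * ε)))) x := fun x =>
    (((tanh_hasDerivAt (G x)).comp x (hG x))).const_mul (-κ)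
  have hUeq : Set.EqOn
      (fun z => -κ * Real.tanh (κ * ((∫ t in (-ℓ)..z, 1 / a t) - c) / (2 * ε))) U S := by
    intro z hz
    simp only [hUdef, hGdef, hint z hz]
  -- derivWithin of the original profile
  have hderivU : ∀ x ∈ S,
      derivWithin (fun z => -κ * Real.tanh (κ * ((∫ t in (-ℓ)..z, 1 / a t) - c) / (2 * ε))) S x
        = -κ * ((1 / Real.cosh (G x) ^ 2) * (κ * (1 / A x) / (2 * ε))) := by
    intro x hx
    rw [derivWithin_congr hUeq (hUeq hx)]
    exact ((hU x).hasDerivWithinAt).derivWithin (hS x hx)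
  intro x hx
  -- the flux `a * u'` agrees on S with a globally differentiable function Q
  set Q : ℝ → ℝ := fun y => -κ ^ 2 / (2 * ε) / Real.cosh (G y) ^ 2 with hQdef
  have hPQ : Set.EqOn (fun y => a y * derivWithin
      (fun z => -κ * Real.tanh (κ * ((∫ t in (-ℓ)..z, 1 / a t) - c) / (2 * ε))) S y) Q S := by
    intro y hy
    have hay : a y ≠ 0 := (hapos y hy).ne'
    simp only [hderivU y hy, hQdef]
    rw [← hAeq y hy]
    have hAy : A y ≠ 0 := (hApos y).ne'
    field_simp
  have hcoshG : ∀ y : ℝ, Real.cosh (G y) ≠ 0 := fun y => (Real.cosh_pos _).ne'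
  have hQ' : HasDerivAt Q
      ((0 * Real.cosh (G x) ^ 2 - (-κ ^ 2 / (2 * ε)) *
        (2 * Real.cosh (G x) ^ 1 * (Real.sinh (G x) * (κ * (1 / A x) / (2 * ε)))))
        / (Real.cosh (G x) ^ 2) ^ 2) x := by
    have hh : HasDerivAt (fun y => Real.cosh (G y) ^ 2)
        (2 * Real.cosh (G x) ^ 1 * (Real.sinh (G x) * (κ * (1 / A x) / (2 * ε)))) x := by
      have := ((Real.hasDerivAt_cosh (G x)).comp x (hG x)).pow 2
      simpa [Pi.pow_def, Function.comp_def] using this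
    exact (hasDerivAt_const x (-κ ^ 2 / (2 * ε))).div hh (pow_ne_zero 2 (hcoshG x))
  have hLHS : derivWithin (fun y => a y * derivWithin
      (fun z => -κ * Real.tanh (κ * ((∫ t in (-ℓ)..z, 1 / a t) - c) / (2 * ε))) S y) S x
      = (0 * Real.cosh (G x) ^ 2 - (-κ ^ 2 / (2 * ε)) *
        (2 * Real.cosh (G x) ^ 1 * (Real.sinh (G x) * (κ * (1 / A x) / (2 * ε)))))
        / (Real.cosh (G x) ^ 2) ^ 2 := by
    rw [derivWithin_congr hPQ (hPQ hx)]
    exact (hQ'.hasDerivWithinAt).derivWithin (hS x hx)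
  rw [hLHS, hderivU x hx, hint x hx]
  show ε * _ = (-κ * Real.tanh (G x)) * _
  rw [Real.tanh_eq_sinh_div_cosh]
  have hC := hcoshG x
  have hAx : A x ≠ 0 := (hApos x).ne'
  field_simp
  ring
end

section
/- For all ε>0, ℓ>0 and u*>0 there exists a unique κ>0 such that κ·tanh(κℓ/(2ε)) = u*. Moreover this κ satisfies u* < κ and κ − u* ≤ 2u*/(e^{u*ℓ/ε} − 1). -/
lemma tanh_exp_formula (x : ℝ) :
    Real.tanh x = (Real.exp (2 * x) - 1) / (Real.exp (2 * x) + 1) := by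
  rw [Real.tanh_eq_sinh_div_cosh, Real.sinh_eq, Real.cosh_eq,
    show (2:ℝ) * x = x + x by ring, Real.exp_add, Real.exp_neg]
  have hx : Real.exp x ≠ 0 := (Real.exp_pos x).ne'
  have hd : Real.exp x + (Real.exp x)⁻¹ ≠ 0 := by positivity
  field_simp

lemma tanh_strictMono : StrictMono Real.tanh := by
  intro a b hab
  rw [tanh_exp_formula, tanh_exp_formula]
  have ha := Real.exp_pos (2 * a)
  have hb := Real.exp_pos (2 * b)
  rw [div_lt_div_iff₀ (by linarith) (by linarith)]
  have : Real.exp (2 * a) < Real.exp (2 * b) := Real.exp_lt_exp.2 (by linarith)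
  nlinarith

lemma tanh_lt_one' (x : ℝ) : Real.tanh x < 1 := by
  rw [tanh_exp_formula]
  have h := Real.exp_pos (2 * x)
  rw [div_lt_one (by linarith)]
  linarith

lemma tanh_pos' {x : ℝ} (hx : 0 < x) : 0 < Real.tanh x := by
  have := tanh_strictMono hx
  rwa [Real.tanh_zero] at this

lemma continuous_tanh' : Continuous Real.tanh := by
  have : Real.tanh = fun x => Real.sinh x / Real.cosh x := by
    funext x; exact Real.tanh_eq_sinh_div_cosh x
  rw [this]
  exact Real.continuous_sinh.div Real.continuous_cosh (fun x => (Real.cosh_pos x).ne')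

/-- For the viscous Burgers steady state, there is a unique `κ > 0` with
`κ tanh(κℓ/(2ε)) = u*`, and it satisfies `u* < κ` and
`κ − u* ≤ 2u*/(e^{u*ℓ/ε} − 1)`. -/
theorem stmt4 (ε ℓ ustar : ℝ) (hε : 0 < ε) (hℓ : 0 < ℓ) (hu : 0 < ustar) :
    ∃ κ : ℝ, (0 < κ ∧ κ * Real.tanh (κ * ℓ / (2 * ε)) = ustar)
      ∧ (∀ κ' : ℝ, 0 < κ' → κ' * Real.tanh (κ' * ℓ / (2 * ε)) = ustar → κ' = κ)
      ∧ ustar < κ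
      ∧ κ - ustar ≤ 2 * ustar / (Real.exp (ustar * ℓ / ε) - 1) := by
  set f : ℝ → ℝ := fun κ => κ * Real.tanh (κ * ℓ / (2 * ε)) with hf
  -- strict monotonicity of f on [0, ∞)
  have hmono : StrictMonoOn f (Set.Ici 0) := by
    intro a ha b hb hab
    simp only [Set.mem_Ici] at ha hb
    have hbpos : 0 < b := lt_of_le_of_lt ha hab
    have htb : 0 < Real.tanh (b * ℓ / (2 * ε)) := tanh_pos' (by positivity)
    have htab : Real.tanh (a * ℓ / (2 * ε)) ≤ Real.tanh (b * ℓ / (2 * ε)) := by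
      apply tanh_strictMono.monotone
      gcongr
    calc a * Real.tanh (a * ℓ / (2 * ε)) ≤ a * Real.tanh (b * ℓ / (2 * ε)) :=
          mul_le_mul_of_nonneg_left htab ha
      _ < b * Real.tanh (b * ℓ / (2 * ε)) := mul_lt_mul_of_pos_right hab htb
  -- continuity
  have hcont : Continuous f :=
    continuous_id.mul (continuous_tanh'.comp (by continuity))
  -- an upper endpoint where f ≥ ustar
  have ht1 : 0 < Real.tanh 1 := tanh_pos' one_pos
  set K : ℝ := max (2 * ε / ℓ) (ustar / Real.tanh 1) with hK
  have hK1 : 2 * ε / ℓ ≤ K := le_max_left _ _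
  have hK2 : ustar / Real.tanh 1 ≤ K := le_max_right _ _
  have hKpos : 0 < K := lt_of_lt_of_le (by positivity) hK1
  have hfK : ustar ≤ f K := by
    have h1 : (1 : ℝ) ≤ K * ℓ / (2 * ε) := by
      rw [le_div_iff₀ (by positivity)]
      calc (1:ℝ) * (2 * ε) = 2 * ε := by ring
        _ = (2 * ε / ℓ) * ℓ := by field_simp
        _ ≤ K * ℓ := by gcongr
    have h2 : Real.tanh 1 ≤ Real.tanh (K * ℓ / (2 * ε)) := tanh_strictMono.monotone h1
    have h3 : ustar ≤ K * Real.tanh 1 := by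
      rw [div_le_iff₀ ht1] at hK2; linarith
    calc ustar ≤ K * Real.tanh 1 := h3
      _ ≤ K * Real.tanh (K * ℓ / (2 * ε)) := by gcongr
  -- existence via IVT
  have hf0 : f 0 = 0 := by simp [hf]
  have hmem : ustar ∈ Set.Icc (f 0) (f K) := ⟨by rw [hf0]; exact hu.le, hfK⟩
  obtain ⟨κ, hκmem, hκeq⟩ := intermediate_value_Icc hKpos.le (hcont.continuousOn) hmem
  have hκeq' : κ * Real.tanh (κ * ℓ / (2 * ε)) = ustar := hκeq
  have hκ0 : 0 ≤ κ := hκmem.1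
  have hκpos : 0 < κ := by
    rcases eq_or_lt_of_le hκ0 with h | h
    · exfalso; rw [← h] at hκeq'; simp at hκeq'; linarith
    · exact h
  refine ⟨κ, ⟨hκpos, hκeq'⟩, ?_, ?_, ?_⟩
  · intro κ' hκ' hκ'eq
    exact hmono.injOn (Set.mem_Ici.2 hκ'.le) (Set.mem_Ici.2 hκ0)
      (by simp only [hf]; rw [hκ'eq, hκeq'])
  · -- ustar < κ
    have ht : Real.tanh (κ * ℓ / (2 * ε)) < 1 := tanh_lt_one' _
    calc ustar = κ * Real.tanh (κ * ℓ / (2 * ε)) := hκeq'.symm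
      _ < κ * 1 := mul_lt_mul_of_pos_left ht hκpos
      _ = κ := mul_one κ
  · -- the bound
    have hustar_lt : ustar < κ := by
      have ht : Real.tanh (κ * ℓ / (2 * ε)) < 1 := tanh_lt_one' _
      calc ustar = κ * Real.tanh (κ * ℓ / (2 * ε)) := hκeq'.symm
        _ < κ * 1 := mul_lt_mul_of_pos_left ht hκpos
        _ = κ := mul_one κ
    set E : ℝ := Real.exp (κ * ℓ / ε) with hE
    have hE1 : 1 < E := by
      rw [hE]; apply Real.one_lt_exp_iff.mpr
      positivity
    have h2x : 2 * (κ * ℓ / (2 * ε)) = κ * ℓ / ε := by field_simp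
    have heq : ustar * (E + 1) = κ * (E - 1) := by
      have := hκeq'
      rw [tanh_exp_formula, h2x, ← hE] at this
      field_simp at this
      linarith [this]
    have hkey : κ - ustar = 2 * ustar / (E - 1) := by
      rw [eq_div_iff (by linarith)]
      nlinarith
    rw [hkey]
    have hE0 : Real.exp (ustar * ℓ / ε) ≤ E := by
      rw [hE]; apply Real.exp_le_exp.2; gcongr
    have hE0gt1 : 1 < Real.exp (ustar * ℓ / ε) := by
      apply Real.one_lt_exp_iff.mpr
      positivity
    gcongr
end

section
/- Let f:ℝ→ℝ be twice continuously differentiable with f″(u) ≥ c₀ > 0 for all u, and let u₊ < u₋ be such that f(u₊)=f(u₋)=:F and f′(u₊)<0<f′(u₋). Then: (i) for every κ>F one has κ−f(s)>0 for all s∈[u₊,u₋], so Φ(κ) := ∫_{u₊}^{u₋} ds/(κ−f(s)) is well defined; (ii) Φ is strictly decreasing on (F,+∞); (iii) Φ(κ)→+∞ as κ→F⁺ and Φ(κ)→0 as κ→+∞; consequently (iv) for every M>0 there exists a unique κ∈(F,+∞) with Φ(κ)=M. -/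
open Set Filter Topology intervalIntegral


/-- Properties of `Φ(κ) = ∫_{u₊}^{u₋} ds/(κ−f(s))` for a strictly convex flux `f`
with `f(u₊)=f(u₋)=F`, `f′(u₊)<0<f′(u₋)`: positivity of the denominator, strict
monotonicity, limiting behavior, and unique solvability of `Φ(κ)=M`. -/
theorem stmt5 (c₀ : ℝ) (hc₀ : 0 < c₀) (f : ℝ → ℝ) (hf : ContDiff ℝ 2 f)
    (hf'' : ∀ u : ℝ, c₀ ≤ deriv (deriv f) u)
    (uplus uminus F : ℝ) (hlt : uplus < uminus)
    (hfp : f uplus = F) (hfm : f uminus = F)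
    (hfp' : deriv f uplus < 0) (hfm' : 0 < deriv f uminus) :
    (∀ κ > F, ∀ s ∈ Set.Icc uplus uminus, 0 < κ - f s)
    ∧ StrictAntiOn (fun κ => ∫ s in uplus..uminus, 1 / (κ - f s)) (Set.Ioi F)
    ∧ Filter.Tendsto (fun κ => ∫ s in uplus..uminus, 1 / (κ - f s))
        (nhdsWithin F (Set.Ioi F)) Filter.atTop
    ∧ Filter.Tendsto (fun κ => ∫ s in uplus..uminus, 1 / (κ - f s))
        Filter.atTop (nhds 0)
    ∧ (∀ M > 0, ∃! κ : ℝ, κ ∈ Set.Ioi F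
        ∧ (∫ s in uplus..uminus, 1 / (κ - f s)) = M) := by
  have hf1 : Differentiable ℝ f := hf.differentiable (by norm_num)
  have hf2 : Differentiable ℝ (deriv f) := by
    have := (contDiff_succ_iff_deriv (n := 1)).mp hf
    exact this.2.2.differentiable (by norm_num)
  have hconv : ConvexOn ℝ univ f := by
    apply convexOn_univ_of_deriv2_nonneg hf1 hf2
    intro x
    simpa [Function.iterate_succ] using (hc₀.le.trans (hf'' x))
  have hle : ∀ s ∈ Icc uplus uminus, f s ≤ F := by
    intro s hs
    have := hconv.le_on_segment (mem_univ uplus) (mem_univ uminus)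
      (by rw [segment_eq_Icc hlt.le]; exact hs)
    simpa [hfp, hfm] using this
  set Φ : ℝ → ℝ := fun κ => ∫ s in uplus..uminus, 1 / (κ - f s) with hΦdef
  have hpos : ∀ κ > F, ∀ s ∈ Set.Icc uplus uminus, 0 < κ - f s := by
    intro κ hκ s hs
    exact sub_pos.2 ((hle s hs).trans_lt hκ)
  have hcontOn : ∀ κ > F, ContinuousOn (fun s => 1 / (κ - f s)) (Icc uplus uminus) := by
    intro κ hκ
    exact continuousOn_const.div
      (continuousOn_const.sub hf1.continuous.continuousOn)
      (fun s hs => (hpos κ hκ s hs).ne')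
  have hInt : ∀ κ > F, IntervalIntegrable (fun s => 1 / (κ - f s)) MeasureTheory.volume uplus uminus :=
    fun κ hκ => (hcontOn κ hκ).intervalIntegrable_of_Icc hlt.le
  -- strict antitonicity
  have hanti : StrictAntiOn Φ (Ioi F) := by
    intro κ₁ h1 κ₂ h2 h12
    apply integral_lt_integral_of_continuousOn_of_le_of_exists_lt hlt
      (hcontOn κ₂ h2) (hcontOn κ₁ h1)
    · intro x hx
      exact one_div_le_one_div_of_le (hpos κ₁ h1 x (Ioc_subset_Icc_self hx))
        (by linarith)
    · exact ⟨uplus, ⟨le_rfl, hlt.le⟩,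
        one_div_lt_one_div_of_lt (hpos κ₁ h1 uplus ⟨le_rfl, hlt.le⟩) (by linarith)⟩
  -- tangent line lower bound
  set L : ℝ := -deriv f uplus with hL
  have hLpos : 0 < L := by simpa [hL] using hfp'
  have htangent : ∀ s ∈ Icc uplus uminus, F - L * (s - uplus) ≤ f s := by
    intro s hs
    rcases eq_or_lt_of_le hs.1 with h | h
    · simp [← h, hfp]
    · have hslope := hconv.deriv_le_slope (mem_univ uplus) (mem_univ s) h
        (hf1.differentiableAt)
      rw [slope_def_field] at hslope
      rw [le_div_iff₀ (by linarith)] at hslope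
      rw [hfp] at hslope
      simp only [hL]
      nlinarith
  -- lower bound by explicit logarithmic integral
  have hcomp : ∀ κ > F, (1/L) * (Real.log (κ - F + L * (uminus - uplus)) - Real.log (κ - F)) ≤ Φ κ := by
    intro κ hκ
    set c : ℝ := κ - F with hc
    have hcpos : 0 < c := sub_pos.2 hκ
    have hinnerpos : ∀ s ∈ Icc uplus uminus, 0 < c + L * (s - uplus) := by
      intro s hs
      have h1 := hs.1
      nlinarith
    have hG : ∀ s ∈ uIcc uplus uminus,
        HasDerivAt (fun t => L⁻¹ * Real.log (c + L * (t - uplus))) (1 / (c + L * (s - uplus))) s := by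
      intro s hs
      rw [uIcc_of_le hlt.le] at hs
      have hinner : HasDerivAt (fun t : ℝ => c + L * (t - uplus)) L s := by
        simpa using (((hasDerivAt_id s).sub_const uplus).const_mul L).const_add c
      have := (hinner.log (hinnerpos s hs).ne').const_mul L⁻¹
      exact this.congr_deriv (by rw [← mul_div_assoc, inv_mul_cancel₀ hLpos.ne'])
    have hIntc : IntervalIntegrable (fun s => 1 / (c + L * (s - uplus)))
        MeasureTheory.volume uplus uminus := by
      apply ContinuousOn.intervalIntegrable_of_Icc hlt.le
      exact continuousOn_const.div (by fun_prop) (fun s hs => (hinnerpos s hs).ne')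
    have heq := intervalIntegral.integral_eq_sub_of_hasDerivAt hG hIntc
    simp only [sub_self, mul_zero, add_zero] at heq
    have hmono := intervalIntegral.integral_mono_on hlt.le hIntc (hInt κ hκ) (fun s hs =>
      one_div_le_one_div_of_le (hpos κ hκ s hs) (by nlinarith [htangent s hs]))
    rw [heq] at hmono
    rw [one_div, mul_sub]
    exact hmono
  -- divergence at F from the right
  have hdiv : Tendsto Φ (𝓝[>] F) atTop := by
    apply tendsto_atTop_mono' _ (eventually_mem_nhdsWithin.mono (fun κ hκ => hcomp κ hκ))
    have h1 : Tendsto (fun κ : ℝ => κ - F) (𝓝[>] F) (𝓝[>] (0:ℝ)) := by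
      apply tendsto_nhdsWithin_of_tendsto_nhds_of_eventually_within
      · have : Tendsto (fun κ : ℝ => κ - F) (𝓝 F) (𝓝 (F - F)) :=
          (continuous_id.sub continuous_const).tendsto F
        simpa using this.mono_left nhdsWithin_le_nhds
      · exact eventually_mem_nhdsWithin.mono (fun κ hκ => mem_Ioi.2 (sub_pos.2 (mem_Ioi.1 hκ)))
    have hlogbot : Tendsto (fun κ => Real.log (κ - F)) (𝓝[>] F) atBot :=
      Real.tendsto_log_nhdsGT_zero.comp h1
    have hlogtop : Tendsto (fun κ => Real.log (κ - F + L * (uminus - uplus))) (𝓝[>] F)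
        (𝓝 (Real.log (L * (uminus - uplus)))) := by
      have hca : ContinuousAt (fun κ : ℝ => Real.log (κ - F + L * (uminus - uplus))) F := by
        apply ContinuousAt.log (by fun_prop)
        have : (0:ℝ) < L * (uminus - uplus) := by nlinarith
        simp only [sub_self, zero_add]
        exact this.ne'
      simpa using hca.tendsto.mono_left nhdsWithin_le_nhds
    have hsum : Tendsto (fun κ => Real.log (κ - F + L * (uminus - uplus)) - Real.log (κ - F))
        (𝓝[>] F) atTop := by
      have hneg : Tendsto (fun κ => -Real.log (κ - F)) (𝓝[>] F) atTop :=
        tendsto_neg_atBot_atTop.comp hlogbot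
      simpa [sub_eq_add_neg] using hlogtop.add_atTop hneg
    exact hsum.const_mul_atTop (by positivity : (0:ℝ) < 1/L)
  -- decay at infinity
  have hnonneg : ∀ κ > F, 0 ≤ Φ κ := fun κ hκ =>
    intervalIntegral.integral_nonneg hlt.le
      (fun s hs => one_div_nonneg.2 (hpos κ hκ s hs).le)
  have hupper : ∀ κ > F, Φ κ ≤ (uminus - uplus) * (1/(κ - F)) := by
    intro κ hκ
    have hmono := intervalIntegral.integral_mono_on hlt.le (hInt κ hκ)
      (_root_.intervalIntegrable_const (c := 1/(κ - F)))
      (fun s hs => one_div_le_one_div_of_le (sub_pos.2 hκ) (by linarith [hle s hs]))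
    show (∫ s in uplus..uminus, 1/(κ - f s)) ≤ (uminus - uplus) * (1/(κ - F))
    simpa [smul_eq_mul] using hmono
  have hzero : Tendsto Φ atTop (𝓝 (0:ℝ)) := by
    have h1 : Tendsto (fun κ : ℝ => κ - F) atTop atTop := by
      simpa [sub_eq_add_neg] using tendsto_atTop_add_const_right atTop (-F) tendsto_id
    have hbound : Tendsto (fun κ : ℝ => (uminus - uplus) * (1/(κ - F))) atTop (𝓝 (0:ℝ)) := by
      have := h1.inv_tendsto_atTop
      have h2 := this.const_mul (uminus - uplus)
      simpa [one_div] using h2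
    apply tendsto_of_tendsto_of_tendsto_of_le_of_le' tendsto_const_nhds hbound
    · exact (eventually_gt_atTop F).mono (fun κ hκ => hnonneg κ hκ)
    · exact (eventually_gt_atTop F).mono (fun κ hκ => hupper κ hκ)
  -- continuity of Φ on Ioi F
  have hcont : ∀ κ₀ ∈ Ioi F, ContinuousAt Φ κ₀ := by
    intro κ₀ hκ₀
    rw [mem_Ioi] at hκ₀
    set ε : ℝ := (κ₀ - F)/2 with hε
    have hεpos : 0 < ε := by simp only [hε]; linarith
    have hΦε : Continuous (fun κ => ∫ s in uplus..uminus, 1 / max (κ - f s) ε) := by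
      apply intervalIntegral.continuous_parametric_intervalIntegral_of_continuous'
      apply Continuous.div continuous_const
      · exact (continuous_fst.sub (hf1.continuous.comp continuous_snd)).max continuous_const
      · exact fun p => (hεpos.trans_le (le_max_right _ _)).ne'
    apply hΦε.continuousAt.congr
    have hmem : Ioi (F + ε) ∈ 𝓝 κ₀ := Ioi_mem_nhds (by simp only [hε]; linarith)
    filter_upwards [hmem] with κ hκ
    apply intervalIntegral.integral_congr
    intro s hs
    rw [uIcc_of_le hlt.le] at hs
    show 1 / max (κ - f s) ε = 1 / (κ - f s)
    rw [max_eq_left (by have := hle s hs; rw [mem_Ioi] at hκ; linarith)]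
  refine ⟨hpos, hanti, hdiv, hzero, ?_⟩
  intro M hM
  obtain ⟨κ₁, hκ₁F, hκ₁⟩ : ∃ κ₁, F < κ₁ ∧ M ≤ Φ κ₁ := by
    obtain ⟨κ₁, h1, h2⟩ := ((hdiv.eventually_ge_atTop M).and eventually_mem_nhdsWithin).exists
    exact ⟨κ₁, h2, h1⟩
  obtain ⟨κ₂, hκ₂gt, hκ₂⟩ : ∃ κ₂, κ₁ < κ₂ ∧ Φ κ₂ ≤ M := by
    obtain ⟨κ₂, h1, h2⟩ := ((hzero.eventually_lt_const hM).and (eventually_gt_atTop κ₁)).exists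
    exact ⟨κ₂, h2, h1.le⟩
  have hsub : Icc κ₁ κ₂ ⊆ Ioi F := fun x hx => lt_of_lt_of_le hκ₁F hx.1
  have hcontI : ContinuousOn Φ (Icc κ₁ κ₂) := fun x hx =>
    (hcont x (hsub hx)).continuousWithinAt
  obtain ⟨κ, hκmem, hκeq⟩ := intermediate_value_Icc' hκ₂gt.le hcontI ⟨hκ₂, hκ₁⟩
  refine ⟨κ, ⟨hsub hκmem, hκeq⟩, ?_⟩
  rintro κ' ⟨hκ'F, hκ'⟩
  have hΦκ' : Φ κ' = M := hκ'
  exact hanti.injOn hκ'F (hsub hκmem) (by rw [hΦκ', hκeq])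
end

section
/- Let ℓ>0, ε>0, let a:[−ℓ,ℓ]→ℝ be continuously differentiable with a(x) ≥ α > 0 for all x, and let q:[−ℓ,ℓ]→ℝ be continuously differentiable. Suppose λ∈ℝ and u:[−ℓ,ℓ]→ℝ is twice continuously differentiable, satisfies u(−ℓ)=u(ℓ)=0, u(x)>0 for all x∈(−ℓ,ℓ), and solves ε(au′)′ − (qu)′ = λu on [−ℓ,ℓ]. Then λ < 0. -/
/-- A Dirichlet eigenvalue of `L u = ε(a u')' − (q u)'` with a positive
eigenfunction is strictly negative. -/
theorem stmt12 (ℓ ε α : ℝ) (hℓ : 0 < ℓ) (hε : 0 < ε) (hα : 0 < α)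
    (a q : ℝ → ℝ) (ha : ContDiffOn ℝ 1 a (Set.Icc (-ℓ) ℓ))
    (haα : ∀ x ∈ Set.Icc (-ℓ) ℓ, α ≤ a x)
    (hq : ContDiffOn ℝ 1 q (Set.Icc (-ℓ) ℓ))
    (lam : ℝ) (u : ℝ → ℝ) (hu : ContDiffOn ℝ 2 u (Set.Icc (-ℓ) ℓ))
    (hbc1 : u (-ℓ) = 0) (hbc2 : u ℓ = 0)
    (hpos : ∀ x ∈ Set.Ioo (-ℓ) ℓ, 0 < u x)
    (heq : ∀ x ∈ Set.Icc (-ℓ) ℓ,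
      ε * derivWithin (fun y => a y * derivWithin u (Set.Icc (-ℓ) ℓ) y)
          (Set.Icc (-ℓ) ℓ) x
        - derivWithin (fun y => q y * u y) (Set.Icc (-ℓ) ℓ) x = lam * u x) :
    lam < 0 := by
  by_contra hlam
  push_neg at hlam
  set s : Set ℝ := Set.Icc (-ℓ) ℓ with hsdef
  have hll : (-ℓ : ℝ) < ℓ := by linarith
  have hmem1 : (-ℓ : ℝ) ∈ s := Set.left_mem_Icc.2 hll.le
  have hmem2 : (ℓ : ℝ) ∈ s := Set.right_mem_Icc.2 hll.le
  have hsU : UniqueDiffOn ℝ s := uniqueDiffOn_Icc hll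
  set u' := derivWithin u s with hu'def
  have hu'c : ContDiffOn ℝ 1 u' s := hu.derivWithin hsU (by norm_num)
  have hud : DifferentiableOn ℝ u s := hu.differentiableOn (by norm_num)
  have hu'd : DifferentiableOn ℝ u' s := hu'c.differentiableOn one_ne_zero
  have had : DifferentiableOn ℝ a s := ha.differentiableOn one_ne_zero
  have hqd : DifferentiableOn ℝ q s := hq.differentiableOn one_ne_zero
  set g := fun x => ε * (a x * u' x) - q x * u x with hgdef
  -- nonnegativity of u on s
  have hun : ∀ x ∈ s, 0 ≤ u x := by
    intro x hx
    rcases eq_or_lt_of_le hx.1 with h | h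
    · rw [← h, hbc1]
    rcases eq_or_lt_of_le hx.2 with h2 | h2
    · rw [h2, hbc2]
    · exact (hpos x ⟨h, h2⟩).le
  -- derivative of g
  have hgderiv : ∀ x ∈ s, HasDerivWithinAt g (lam * u x) s x := by
    intro x hx
    have h1 : DifferentiableWithinAt ℝ (fun y => a y * u' y) s x :=
      (had x hx).mul (hu'd x hx)
    have h2 : DifferentiableWithinAt ℝ (fun y => q y * u y) s x :=
      (hqd x hx).mul (hud x hx)
    have h3 := (h1.hasDerivWithinAt.const_mul ε).sub h2.hasDerivWithinAt
    rw [heq x hx] at h3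
    exact h3
  -- g is monotone on s
  have hgc : ContinuousOn g s :=
    (continuousOn_const.mul (ha.continuousOn.mul hu'c.continuousOn)).sub
      (hq.continuousOn.mul hu.continuousOn)
  have hmono : MonotoneOn g s := by
    apply monotoneOn_of_deriv_nonneg (convex_Icc _ _) hgc
    · intro x hx
      rw [interior_Icc] at hx
      exact (((hgderiv x (Set.Ioo_subset_Icc_self hx)).hasDerivAt
        (Icc_mem_nhds hx.1 hx.2)).differentiableAt).differentiableWithinAt
    · intro x hx
      rw [interior_Icc] at hx
      rw [((hgderiv x (Set.Ioo_subset_Icc_self hx)).hasDerivAt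
        (Icc_mem_nhds hx.1 hx.2)).deriv]
      exact mul_nonneg hlam (hun x (Set.Ioo_subset_Icc_self hx))
  -- boundary derivative signs
  have hd1 : 0 ≤ u' (-ℓ) := by
    have hder : HasDerivWithinAt u (u' (-ℓ)) (Set.Ioc (-ℓ) ℓ) (-ℓ) :=
      ((hud (-ℓ) hmem1).hasDerivWithinAt).mono Set.Ioc_subset_Icc_self
    rw [hasDerivWithinAt_iff_tendsto_slope,
      Set.diff_singleton_eq_self (by simp), nhdsWithin_Ioc_eq_nhdsGT hll] at hder
    refine ge_of_tendsto hder ?_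
    filter_upwards [Ioc_mem_nhdsGT hll] with y hy
    rw [slope_def_field, hbc1, sub_zero]
    have h1 : 0 ≤ u y := hun y (Set.Ioc_subset_Icc_self hy)
    have h2 : (0:ℝ) < y - (-ℓ) := by linarith [hy.1]
    exact div_nonneg h1 h2.le
  have hd2 : u' ℓ ≤ 0 := by
    have hder : HasDerivWithinAt u (u' ℓ) (Set.Ico (-ℓ) ℓ) ℓ :=
      ((hud ℓ hmem2).hasDerivWithinAt).mono Set.Ico_subset_Icc_self
    rw [hasDerivWithinAt_iff_tendsto_slope,
      Set.diff_singleton_eq_self (by simp), nhdsWithin_Ico_eq_nhdsLT hll] at hder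
    refine le_of_tendsto hder ?_
    filter_upwards [Ico_mem_nhdsLT hll] with y hy
    rw [slope_def_field, hbc2, sub_zero]
    have h1 : 0 ≤ u y := hun y (Set.Ico_subset_Icc_self hy)
    have h2 : y - ℓ < 0 := by linarith [hy.2]
    exact div_nonpos_of_nonneg_of_nonpos h1 h2.le
  have hax : ∀ x ∈ s, 0 < a x := fun x hx => lt_of_lt_of_le hα (haα x hx)
  -- g vanishes identically
  have hg1 : 0 ≤ g (-ℓ) := by
    simp only [hgdef, hbc1, mul_zero, sub_zero]
    exact mul_nonneg hε.le (mul_nonneg (hax _ hmem1).le hd1)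
  have hg2 : g ℓ ≤ 0 := by
    simp only [hgdef, hbc2, mul_zero, sub_zero]
    exact mul_nonpos_of_nonneg_of_nonpos hε.le
      (mul_nonpos_of_nonneg_of_nonpos (hax _ hmem2).le hd2)
  have hg0 : ∀ x ∈ s, g x = 0 := fun x hx =>
    le_antisymm (le_trans (hmono hx hmem2 hx.2) hg2) (le_trans hg1 (hmono hmem1 hx hx.1))
  -- the first-order ODE for u
  set c : ℝ → ℝ := fun x => q x / (ε * a x) with hcdef
  have hode : ∀ x ∈ s, u' x = c x * u x := by
    intro x hx
    have h0 : ε * (a x * u' x) - q x * u x = 0 := hg0 x hx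
    have hne : ε * a x ≠ 0 := (mul_pos hε (hax x hx)).ne'
    rw [hcdef, div_mul_eq_mul_div, eq_div_iff hne]
    linear_combination h0
  -- bound on c
  have hcc : ContinuousOn c s := by
    apply hq.continuousOn.div (continuousOn_const.mul ha.continuousOn)
    intro x hx
    exact (mul_pos hε (hax x hx)).ne'
  obtain ⟨K, hK⟩ := isCompact_Icc.exists_bound_of_continuousOn hcc
  -- Grönwall: u ≡ 0
  have hgron : ∀ x ∈ Set.Icc (-ℓ) ℓ, ‖u x‖ ≤ gronwallBound 0 K 0 (x - (-ℓ)) := by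
    apply norm_le_gronwallBound_of_norm_deriv_right_le (f' := fun x => c x * u x)
      hu.continuousOn
    · intro x hx
      have hder : HasDerivWithinAt u (u' x) s x :=
        (hud x (Set.Ico_subset_Icc_self hx)).hasDerivWithinAt
      rw [hode x (Set.Ico_subset_Icc_self hx)] at hder
      apply hder.mono_of_mem_nhdsWithin
      rw [mem_nhdsWithin]
      exact ⟨Set.Iio ℓ, isOpen_Iio, hx.2, fun y hy => ⟨le_trans hx.1 hy.2, hy.1.le⟩⟩
    · rw [hbc1, norm_zero]
    · intro x hx
      rw [norm_mul, add_zero]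
      exact mul_le_mul_of_nonneg_right (hK x (Set.Ico_subset_Icc_self hx)) (norm_nonneg _)
  have h0 : u 0 = 0 := by
    have := hgron 0 ⟨by linarith, hℓ.le⟩
    rw [gronwallBound_ε0_δ0] at this
    simpa using this
  exact absurd h0 (ne_of_gt (hpos 0 ⟨by linarith, hℓ⟩))
end
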